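/- Let H be an n×n complex Hermitian matrix with eigenvalues λ_1 ≤ ... ≤ λ_n and orthonormal eigenvectors v_1,...,v_n, let u_0 ∈ ℂ^n, t ≥ 0, and let w(t,p) = Σ_{k=1}^n e^{-|p-λ_k t|} ⟨v_k, u_0⟩ v_k. Then for all real p, P with max(λ_n t, 0) < p < P, one has (1/(e^{-p} - e^{-P})) · ∫_p^P w(t,q) dq = exp(tH) u_0. -/

import Mathlib

open scoped BigOperators ComplexConjugate
open MeasureTheory
open scoped Matrix

/-- Finite-domain integral recovery of `exp(tH) u₀` from the Schrödingerised solution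
`w(t,p) = ∑ₖ e^{-|p-λₖt|} ⟨vₖ,u₀⟩ vₖ`:
`(e^{-p} - e^{-P})⁻¹ ∫_p^P w(t,q) dq = exp(tH) u₀` for `max(λₙt,0) < p < P`. -/
theorem schrodingerisation_finite_integral_recovery
    (n : ℕ) (H : Matrix (Fin (n + 1)) (Fin (n + 1)) ℂ) (hH : H.IsHermitian)
    (lam : Fin (n + 1) → ℝ) (hmono : Monotone lam)
    (v : Fin (n + 1) → (Fin (n + 1) → ℂ))
    (hortho : ∀ j k, (∑ i, conj (v j i) * v k i) = if j = k then 1 else 0)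
    (heig : ∀ k, H.mulVec (v k) = (lam k : ℂ) • v k)
    (u0 : Fin (n + 1) → ℂ) (t : ℝ) (ht : 0 ≤ t)
    (w : ℝ → ℝ → (Fin (n + 1) → ℂ))
    (hw : ∀ τ p, w τ p =
      ∑ k, (Real.exp (-|p - lam k * τ|) : ℂ) • (∑ i, conj (v k i) * u0 i) • v k)
    (p P : ℝ) (hp : max (lam (Fin.last n) * t) 0 < p) (hpP : p < P) :
    ((1 : ℝ) / (Real.exp (-p) - Real.exp (-P))) • (∫ q in p..P, w t q) =
      (NormedSpace.exp ((t : ℂ) • H)).mulVec u0 := by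
  classical
  set c : Fin (n + 1) → ℂ := fun k => ∑ i, conj (v k i) * u0 i with hc
  set V : Matrix (Fin (n + 1)) (Fin (n + 1)) ℂ := Matrix.of fun i k => v k i with hV
  -- unitarity of V
  have hVHV : Vᴴ * V = 1 := by
    ext j k
    have h0 := hortho j k
    simp only [starRingEnd_apply] at h0
    simp only [Matrix.mul_apply, Matrix.conjTranspose_apply, Matrix.one_apply, hV,
      Matrix.of_apply]
    exact h0
  have hVVH : V * Vᴴ = 1 := mul_eq_one_comm.mp hVHV
  have hVunit : IsUnit V := ⟨⟨V, Vᴴ, hVVH, hVHV⟩, rfl⟩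
  have hVinv : V⁻¹ = Vᴴ := Matrix.inv_eq_right_inv hVVH
  -- diagonalisation of H
  have hHV : H * V = V * Matrix.diagonal (fun k => (lam k : ℂ)) := by
    ext i k
    have h1 := congrFun (heig k) i
    simp only [Matrix.mulVec, dotProduct, Pi.smul_apply, smul_eq_mul] at h1
    rw [Matrix.mul_diagonal]
    simp only [Matrix.mul_apply, Matrix.of_apply, hV]
    rw [h1]; ring
  have hH2 : (t : ℂ) • H = V * Matrix.diagonal (fun k => (t : ℂ) * lam k) * V⁻¹ := by
    have : H = V * Matrix.diagonal (fun k => (lam k : ℂ)) * V⁻¹ := by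
      rw [hVinv, ← hHV, Matrix.mul_assoc, hVVH, Matrix.mul_one]
    have hD : (Matrix.diagonal fun k => (t : ℂ) * lam k) =
        (t : ℂ) • Matrix.diagonal (fun k => (lam k : ℂ)) := by
      rw [← Matrix.diagonal_smul]
      rfl
    rw [this, hD, Matrix.mul_smul, Matrix.smul_mul]
  -- matrix exponential
  have hexp : NormedSpace.exp ((t : ℂ) • H) =
      V * Matrix.diagonal (fun k => Complex.exp ((t : ℂ) * lam k)) * V⁻¹ := by
    rw [hH2, Matrix.exp_conj V _ hVunit, Matrix.exp_diagonal]
    congr 2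
    rw [Pi.exp_def, ← Complex.exp_eq_exp_ℂ]
  -- RHS entrywise
  have hRHS : ∀ i, (NormedSpace.exp ((t : ℂ) • H)).mulVec u0 i =
      ∑ k, Complex.exp (t * lam k) * (c k * v k i) := by
    intro i
    rw [hexp, hVinv]
    simp only [Matrix.mulVec, dotProduct, Matrix.mul_apply,
      Matrix.conjTranspose_apply, Matrix.of_apply, hV, Matrix.diagonal_apply, mul_ite,
      ite_mul, mul_zero, zero_mul, Finset.sum_ite_eq, Finset.sum_ite_eq', Finset.mem_univ,
      if_true]
    simp only [hc, starRingEnd_apply, Finset.sum_mul, Finset.mul_sum]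
    rw [Finset.sum_comm]
    exact Finset.sum_congr rfl fun k _ => Finset.sum_congr rfl fun j _ => by ring
  -- pointwise form of w on the integration interval
  have hlam : ∀ (k : Fin (n + 1)) (q : ℝ), q ∈ Set.uIcc p P → lam k * t ≤ q := by
    intro k q hq
    have h1 : lam k * t ≤ lam (Fin.last n) * t :=
      mul_le_mul_of_nonneg_right (hmono (Fin.le_last k)) ht
    have h2 : p ≤ q := by
      rw [Set.uIcc_of_le hpP.le] at hq
      exact hq.1
    have := lt_of_le_of_lt (le_max_left _ 0) hp
    linarith
  have hkey : Set.EqOn (w t) (fun q => ∑ k, (Real.exp (lam k * t - q) : ℂ) • c k • v k)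
      (Set.uIcc p P) := by
    intro q hq
    rw [hw t q]
    refine Finset.sum_congr rfl fun k _ => ?_
    have : -|q - lam k * t| = lam k * t - q := by
      rw [abs_of_nonneg (by linarith [hlam k q hq])]; ring
    rw [this]
  -- compute the integral
  have hint : (∫ q in p..P, w t q) =
      ∑ k, ((Real.exp (lam k * t - p) - Real.exp (lam k * t - P) : ℝ) : ℂ) • c k • v k := by
    rw [intervalIntegral.integral_congr hkey,
      intervalIntegral.integral_finset_sum (μ := volume)
        (f := fun k q => (Real.exp (lam k * t - q) : ℂ) • c k • v k)
        (fun k _ => (Continuous.intervalIntegrable (by fun_prop) p P))]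
    refine Finset.sum_congr rfl fun k _ => ?_
    rw [intervalIntegral.integral_smul_const]
    congr 1
    rw [intervalIntegral.integral_ofReal]
    norm_cast
    rw [intervalIntegral.integral_comp_sub_left (fun x => Real.exp x) (lam k * t)]
    rw [integral_exp]
  -- assemble
  have hne : Real.exp (-p) - Real.exp (-P) ≠ 0 := by
    have := Real.exp_lt_exp.mpr (show -P < -p by linarith)
    linarith
  funext i
  rw [hRHS i]
  simp only [Pi.smul_apply, hint, Finset.sum_apply, Pi.smul_apply, smul_eq_mul]
  rw [Finset.smul_sum]
  refine Finset.sum_congr rfl fun k _ => ?_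
  have hfac : Real.exp (lam k * t - p) - Real.exp (lam k * t - P) =
      Real.exp (lam k * t) * (Real.exp (-p) - Real.exp (-P)) := by
    rw [mul_sub, ← Real.exp_add, ← Real.exp_add]; ring_nf
  have hce : Complex.exp ((t : ℂ) * (lam k : ℂ)) = (Real.exp (lam k * t) : ℂ) := by
    rw [Complex.ofReal_exp]
    congr 1
    push_cast
    ring
  have hneC : Complex.exp (-(p : ℂ)) - Complex.exp (-(P : ℂ)) ≠ 0 := by
    have h0 : ((Real.exp (-p) - Real.exp (-P) : ℝ) : ℂ) ≠ 0 := Complex.ofReal_ne_zero.mpr hne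
    simpa [Complex.ofReal_exp] using h0
  rw [Complex.real_smul, hce, hfac]
  push_cast [Complex.ofReal_exp]
  field_simp [hneC]
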